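/- Let ζ be a countable ordinal and let C ⊆ (2^ℕ)^ζ be a closed set of positive measure with respect to the product over ζ of copies of the coin-flipping measure on 2^ℕ. Then there is a closed set C* ⊆ C of positive measure such that for every ξ < ζ and every ȳ ∈ (2^ℕ)^ξ, the section (C*)_{ȳ} = { ȳ' ∈ (2^ℕ)^{[ξ,ζ)} : ȳ⌢ȳ' ∈ C* } is either empty or has positive measure in (2^ℕ)^{[ξ,ζ)}. -/

import Mathlib

open MeasureTheory

def IsCantorProductMeasure {I : Type*} (μ : Measure (I → (ℕ → Bool))) : Prop :=
  ∀ (s : Finset (I × ℕ)) (b : I × ℕ → Bool),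
    μ {x | ∀ p ∈ s, x p.1 p.2 = b p} = (2 : ENNReal)⁻¹ ^ s.card

namespace CS5
open Set
open scoped ENNReal NNReal

variable {κ : Type*}

def Cyl (κ : Type*) : Set (Set (κ → ℕ → Bool)) :=
  {S | ∃ (s : Finset (κ × ℕ)) (b : κ × ℕ → Bool), S = {x | ∀ p ∈ s, x p.1 p.2 = b p}}

lemma measurableSet_cylSet (s : Finset (κ × ℕ)) (b : κ × ℕ → Bool) :
    MeasurableSet {x : κ → ℕ → Bool | ∀ p ∈ s, x p.1 p.2 = b p} := by
  have h : {x : κ → ℕ → Bool | ∀ p ∈ s, x p.1 p.2 = b p} =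
      ⋂ p ∈ (s : Finset (κ × ℕ)), {x : κ → ℕ → Bool | x p.1 p.2 = b p} := by
    ext x; simp
  rw [h]
  refine MeasurableSet.biInter s.countable_toSet fun p _ => ?_
  have h1 : Measurable fun x : κ → ℕ → Bool => x p.1 p.2 :=
    (measurable_pi_apply p.2).comp (measurable_pi_apply p.1)
  exact h1 (MeasurableSet.singleton (b p))

lemma pi_eq_generateFrom (κ : Type*) :
    (inferInstance : MeasurableSpace (κ → ℕ → Bool)) =
      MeasurableSpace.generateFrom (Cyl κ) := by
  refine le_antisymm ?_ (MeasurableSpace.generateFrom_le ?_)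
  · refine iSup_le fun i => ?_
    rw [MeasurableSpace.comap_le_iff_le_map]
    refine iSup_le fun n => ?_
    rw [MeasurableSpace.comap_le_iff_le_map]
    intro S _
    show MeasurableSet[MeasurableSpace.generateFrom (Cyl κ)]
      ((fun x : κ → ℕ → Bool => x i) ⁻¹' ((fun y : ℕ → Bool => y n) ⁻¹' S))
    have hrw : ((fun x : κ → ℕ → Bool => x i) ⁻¹' ((fun y : ℕ → Bool => y n) ⁻¹' S)) =
        ⋃ b ∈ S, {x : κ → ℕ → Bool | x i n = b} := by
      ext x
      constructor
      · intro h; exact Set.mem_biUnion h rfl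
      · rintro ⟨A, ⟨b, rfl⟩, hA⟩
        simp only [Set.mem_iUnion, Set.mem_setOf_eq] at hA
        obtain ⟨hb, he⟩ := hA
        simp only [Set.mem_preimage]
        rw [he]; exact hb
    rw [hrw]
    refine MeasurableSet.biUnion S.to_countable fun b _ => ?_
    refine MeasurableSpace.measurableSet_generateFrom ⟨{(i, n)}, fun _ => b, ?_⟩
    ext x; simp
  · rintro S ⟨s, b, rfl⟩; exact measurableSet_cylSet s b

lemma isPiSystem_cyl (κ : Type*) : IsPiSystem (Cyl κ) := by
  rintro S ⟨s₁, b₁, rfl⟩ T ⟨s₂, b₂, rfl⟩ hne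
  obtain ⟨z, hz1, hz2⟩ := hne
  classical
  refine ⟨s₁ ∪ s₂, fun p => if p ∈ s₁ then b₁ p else b₂ p, ?_⟩
  ext x
  simp only [Set.mem_inter_iff, Set.mem_setOf_eq, Finset.mem_union]
  constructor
  · rintro ⟨h1, h2⟩ p hp
    by_cases hp1 : p ∈ s₁
    · simp [hp1, h1 p hp1]
    · rcases hp with hp | hp
      · exact absurd hp hp1
      · simp [hp1, h2 p hp]
  · intro h
    constructor
    · intro p hp
      have := h p (Or.inl hp)
      simpa [hp] using this
    · intro p hp
      by_cases hp1 : p ∈ s₁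
      · have h1 := h p (Or.inl hp1)
        rw [if_pos hp1] at h1
        have e : b₁ p = b₂ p := by rw [← hz1 p hp1, hz2 p hp]
        rw [h1, e]
      · have := h p (Or.inr hp)
        simpa [hp1] using this

lemma icpm_prob {μ : Measure (κ → ℕ → Bool)}
    (h : IsCantorProductMeasure μ) : IsProbabilityMeasure μ := by
  constructor
  have := h ∅ (fun _ => true)
  simpa using this

lemma ICPM.unique {μ₁ μ₂ : Measure (κ → ℕ → Bool)}
    (h₁ : IsCantorProductMeasure μ₁) (h₂ : IsCantorProductMeasure μ₂) : μ₁ = μ₂ := by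
  haveI := icpm_prob h₁
  haveI := icpm_prob h₂
  refine ext_of_generate_finite (Cyl κ) (pi_eq_generateFrom κ) (isPiSystem_cyl κ) ?_ ?_
  · rintro S ⟨s, b, rfl⟩; rw [h₁ s b, h₂ s b]
  · simp


lemma icpm_map_comp {κ' : Type*} {μ : Measure (κ → ℕ → Bool)} (h : IsCantorProductMeasure μ)
    (f : κ' → κ) (hf : Function.Injective f) :
    IsCantorProductMeasure (μ.map (fun x (k' : κ') => x (f k'))) := by
  classical
  intro s b
  have hmeas : Measurable fun (x : κ → ℕ → Bool) (k' : κ') => x (f k') :=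
    measurable_pi_lambda _ fun k' => measurable_pi_apply (f k')
  rw [Measure.map_apply hmeas (measurableSet_cylSet s b)]
  set emb : κ' × ℕ ↪ κ × ℕ :=
    ⟨fun p => (f p.1, p.2), by
      rintro ⟨a1, a2⟩ ⟨c1, c2⟩ h
      simp only [Prod.mk.injEq] at h
      exact Prod.ext (hf h.1) h.2⟩ with hemb
  set b' : κ × ℕ → Bool := fun q => if hq : ∃ p ∈ s, emb p = q then b hq.choose else true
    with hb'
  have hbval : ∀ p ∈ s, b' (emb p) = b p := by
    intro p hp
    have hex : ∃ p' ∈ s, emb p' = emb p := ⟨p, hp, rfl⟩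
    rw [hb']
    simp only [dif_pos hex]
    have hsp := hex.choose_spec
    have : hex.choose = p := emb.injective hsp.2
    rw [this]
  have hset : ((fun x (k' : κ') => x (f k')) ⁻¹' {x | ∀ p ∈ s, x p.1 p.2 = b p})
      = {x : κ → ℕ → Bool | ∀ q ∈ s.map emb, x q.1 q.2 = b' q} := by
    ext x
    simp only [Set.mem_preimage, Set.mem_setOf_eq, Finset.mem_map]
    constructor
    · rintro hx q ⟨p, hp, rfl⟩
      rw [hbval p hp]
      exact hx p hp
    · intro hx p hp
      have := hx (emb p) ⟨p, hp, rfl⟩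
      rw [hbval p hp] at this
      exact this
  rw [hset, h (s.map emb) b', Finset.card_map]

variable (p : κ → Prop) [DecidablePred p]

def glueP (y : {i // p i} → ℕ → Bool) (y' : {i // ¬ p i} → ℕ → Bool) : κ → ℕ → Bool :=
  fun i => if h : p i then y ⟨i, h⟩ else y' ⟨i, h⟩

lemma measurable_glueP :
    Measurable (fun z : ({i // p i} → ℕ → Bool) × ({i // ¬ p i} → ℕ → Bool) =>
      glueP p z.1 z.2) := by
  apply measurable_pi_lambda
  intro i
  by_cases h : p i
  · simp only [glueP, dif_pos h]
    exact (measurable_pi_apply _).comp measurable_fst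
  · simp only [glueP, dif_neg h]
    exact (measurable_pi_apply _).comp measurable_snd

lemma measurable_glueP_right (y : {i // p i} → ℕ → Bool) :
    Measurable (fun y' : {i // ¬ p i} → ℕ → Bool => glueP p y y') :=
  (measurable_glueP p).comp measurable_prodMk_left

def resP (x : κ → ℕ → Bool) : {i // p i} → ℕ → Bool := fun j => x j.1

lemma measurable_resP : Measurable (resP (κ := κ) p) :=
  measurable_pi_lambda _ fun j => measurable_pi_apply _

lemma resP_glueP (y : {i // p i} → ℕ → Bool) (y' : {i // ¬ p i} → ℕ → Bool) :
    resP p (glueP p y y') = y := by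
  funext j
  have : p j.1 := j.2
  simp [resP, glueP, this]

lemma icpm_glue_prod {μ₁ : Measure ({i // p i} → ℕ → Bool)}
    {μ₂ : Measure ({i // ¬ p i} → ℕ → Bool)}
    (h₁ : IsCantorProductMeasure μ₁) (h₂ : IsCantorProductMeasure μ₂) :
    IsCantorProductMeasure ((μ₁.prod μ₂).map (fun z => glueP p z.1 z.2)) := by
  classical
  haveI := icpm_prob h₁
  haveI := icpm_prob h₂
  intro s b
  rw [Measure.map_apply (measurable_glueP p) (measurableSet_cylSet s b)]
  set s₁ : Finset ({i // p i} × ℕ) := (s.filter (fun q => p q.1)).attach.map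
    ⟨fun q => (⟨q.1.1, by have h := q.2; rw [Finset.mem_filter] at h; exact h.2⟩, q.1.2), by
      rintro ⟨⟨a1, a2⟩, ha⟩ ⟨⟨c1, c2⟩, hc⟩ h
      simp only [Prod.mk.injEq, Subtype.mk.injEq] at h
      simp only [Subtype.mk.injEq, Prod.mk.injEq]
      exact ⟨h.1, h.2⟩⟩ with hs₁
  set s₂ : Finset ({i // ¬ p i} × ℕ) := (s.filter (fun q => ¬ p q.1)).attach.map
    ⟨fun q => (⟨q.1.1, by have h := q.2; rw [Finset.mem_filter] at h; exact h.2⟩, q.1.2), by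
      rintro ⟨⟨a1, a2⟩, ha⟩ ⟨⟨c1, c2⟩, hc⟩ h
      simp only [Prod.mk.injEq, Subtype.mk.injEq] at h
      simp only [Subtype.mk.injEq, Prod.mk.injEq]
      exact ⟨h.1, h.2⟩⟩ with hs₂
  have hset : ((fun z : _ × _ => glueP p z.1 z.2) ⁻¹' {x | ∀ q ∈ s, x q.1 q.2 = b q})
      = {y : {i // p i} → ℕ → Bool | ∀ r ∈ s₁, y r.1 r.2 = b (r.1.1, r.2)} ×ˢ
        {y' : {i // ¬ p i} → ℕ → Bool | ∀ r ∈ s₂, y' r.1 r.2 = b (r.1.1, r.2)} := by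
    ext ⟨y, y'⟩
    simp only [Set.mem_preimage, Set.mem_setOf_eq, Set.mem_prod, hs₁, hs₂,
      Finset.mem_map, Finset.mem_attach, Function.Embedding.coeFn_mk]
    constructor
    · intro hx
      constructor
      · rintro r ⟨q, -, rfl⟩
        have hq := q.2
        rw [Finset.mem_filter] at hq
        have := hx q.1 hq.1
        exact (show y ⟨q.1.1, hq.2⟩ q.1.2 = b q.1 by simpa [glueP, hq.2] using this)
      · rintro r ⟨q, -, rfl⟩
        have hq := q.2
        rw [Finset.mem_filter] at hq
        have := hx q.1 hq.1
        exact (show y' ⟨q.1.1, hq.2⟩ q.1.2 = b q.1 by simpa [glueP, hq.2] using this)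
    · rintro ⟨h1, h2⟩ q hq
      by_cases hpq : p q.1
      · have hqf : q ∈ s.filter (fun q => p q.1) := Finset.mem_filter.2 ⟨hq, hpq⟩
        have := h1 (⟨q.1, hpq⟩, q.2) ⟨⟨q, hqf⟩, trivial, rfl⟩
        simpa [glueP, hpq] using this
      · have hqf : q ∈ s.filter (fun q => ¬ p q.1) := Finset.mem_filter.2 ⟨hq, hpq⟩
        have := h2 (⟨q.1, hpq⟩, q.2) ⟨⟨q, hqf⟩, trivial, rfl⟩
        simpa [glueP, hpq] using this
  rw [hset, Measure.prod_prod, h₁ s₁ _, h₂ s₂ _]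
  rw [← pow_add]
  congr 1
  rw [hs₁, hs₂]
  simp only [Finset.card_map, Finset.card_attach]
  exact Finset.card_filter_add_card_filter_not _


lemma icpm_fubini {μ : Measure (κ → ℕ → Bool)} {μ₁ : Measure ({i // p i} → ℕ → Bool)}
    {μ₂ : Measure ({i // ¬ p i} → ℕ → Bool)}
    (hμ : IsCantorProductMeasure μ) (h₁ : IsCantorProductMeasure μ₁)
    (h₂ : IsCantorProductMeasure μ₂) {S : Set (κ → ℕ → Bool)} (hS : MeasurableSet S) :
    μ S = ∫⁻ y, μ₂ {y' | glueP p y y' ∈ S} ∂μ₁ := by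
  haveI := icpm_prob h₁
  haveI := icpm_prob h₂
  have hmap : μ = (μ₁.prod μ₂).map (fun z => glueP p z.1 z.2) :=
    ICPM.unique hμ (icpm_glue_prod p h₁ h₂)
  rw [hmap, Measure.map_apply (measurable_glueP p) hS,
    Measure.prod_apply ((measurable_glueP p) hS)]
  rfl

lemma measurable_sect {μ₂ : Measure ({i // ¬ p i} → ℕ → Bool)} [SFinite μ₂]
    {S : Set (κ → ℕ → Bool)} (hS : MeasurableSet S) :
    Measurable fun y : {i // p i} → ℕ → Bool => μ₂ {y' | glueP p y y' ∈ S} :=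
  measurable_measure_prodMk_left ((measurable_glueP p) hS)

lemma icpm_markov {μ : Measure (κ → ℕ → Bool)} {μ₁ : Measure ({i // p i} → ℕ → Bool)}
    {μ₂ : Measure ({i // ¬ p i} → ℕ → Bool)}
    (hμ : IsCantorProductMeasure μ) (h₁ : IsCantorProductMeasure μ₁)
    (h₂ : IsCantorProductMeasure μ₂) {S : Set (κ → ℕ → Bool)} (hS : MeasurableSet S)
    (t : ℝ≥0∞) :
    μ {x | x ∈ S ∧ μ₂ {y' | glueP p (resP p x) y' ∈ S} < t} ≤ t := by
  haveI := icpm_prob h₁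
  haveI := icpm_prob h₂
  set m : ({i // p i} → ℕ → Bool) → ℝ≥0∞ := fun y => μ₂ {y' | glueP p y y' ∈ S} with hm
  have hmeas_m : Measurable m := measurable_sect p hS
  have hB : MeasurableSet {x | x ∈ S ∧ m (resP p x) < t} := by
    have : {x | x ∈ S ∧ m (resP p x) < t}
        = S ∩ (resP p ⁻¹' {y | m y < t}) := rfl
    rw [this]
    exact hS.inter ((measurable_resP p) (hmeas_m measurableSet_Iio))
  rw [icpm_fubini p hμ h₁ h₂ hB]
  have hbound : ∀ y, μ₂ {y' | glueP p y y' ∈ {x | x ∈ S ∧ m (resP p x) < t}} ≤ t := by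
    intro y
    have hrw : {y' | glueP p y y' ∈ {x | x ∈ S ∧ m (resP p x) < t}}
        = {y' | glueP p y y' ∈ S} ∩ {y' : {i // ¬ p i} → ℕ → Bool | m y < t} := by
      ext y'
      simp [resP_glueP]
    rw [hrw]
    by_cases hy : m y < t
    · calc μ₂ ({y' | glueP p y y' ∈ S} ∩ {y' | m y < t})
          ≤ μ₂ {y' | glueP p y y' ∈ S} := measure_mono Set.inter_subset_left
        _ = m y := rfl
        _ ≤ t := hy.le
    · have hem : {y' : {i // ¬ p i} → ℕ → Bool | m y < t} = ∅ := by
        ext y'; simp [hy]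
      rw [hem, Set.inter_empty]
      simp
  calc ∫⁻ y, μ₂ {y' | glueP p y y' ∈ {x | x ∈ S ∧ m (resP p x) < t}} ∂μ₁
      ≤ ∫⁻ _, t ∂μ₁ := lintegral_mono hbound
    _ = t := by simp

lemma icpm_sect_zero {μ : Measure (κ → ℕ → Bool)} {μ₁ : Measure ({i // p i} → ℕ → Bool)}
    {μ₂ : Measure ({i // ¬ p i} → ℕ → Bool)}
    (hμ : IsCantorProductMeasure μ) (h₁ : IsCantorProductMeasure μ₁)
    (h₂ : IsCantorProductMeasure μ₂) {S : Set (κ → ℕ → Bool)} (hS : MeasurableSet S) :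
    μ {x | x ∈ S ∧ μ₂ {y' | glueP p (resP p x) y' ∈ S} = 0} = 0 := by
  have hle : ∀ t : ℝ≥0∞, 0 < t →
      μ {x | x ∈ S ∧ μ₂ {y' | glueP p (resP p x) y' ∈ S} = 0} ≤ t := by
    intro t ht
    refine le_trans (measure_mono ?_) (icpm_markov p hμ h₁ h₂ hS t)
    rintro x ⟨hxS, hx0⟩
    exact ⟨hxS, by rw [hx0]; exact ht⟩
  by_contra h0
  have hpos : 0 < μ {x | x ∈ S ∧ μ₂ {y' | glueP p (resP p x) y' ∈ S} = 0} :=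
    pos_iff_ne_zero.2 h0
  haveI := icpm_prob hμ
  have hne : μ {x | x ∈ S ∧ μ₂ {y' | glueP p (resP p x) y' ∈ S} = 0} ≠ ∞ :=
    measure_ne_top _ _
  have := hle _ (ENNReal.half_pos h0)
  exact absurd this (not_le.2 (ENNReal.half_lt_self h0 hne))


lemma isClosed_sect_ge [Countable κ] {μ₂ : Measure ({i // ¬ p i} → ℕ → Bool)}
    (h₂ : IsCantorProductMeasure μ₂) {S : Set (κ → ℕ → Bool)} (hS : IsClosed S)
    (t : ℝ≥0∞) :
    IsClosed {x | t ≤ μ₂ {y' | glueP p (resP p x) y' ∈ S}} := by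
  haveI := icpm_prob h₂
  have hres : Continuous (resP (κ := κ) p) := continuous_pi fun j => continuous_apply _
  have hopen : IsOpen {y : {i // p i} → ℕ → Bool | μ₂ {y' | glueP p y y' ∈ S} < t} := by
    rw [isOpen_iff_forall_mem_open]
    intro y hy
    obtain ⟨U, hUsub, hUopen, hUlt⟩ :=
      Set.exists_isOpen_lt_of_lt {y' | glueP p y y' ∈ S} t hy
    set e := Homeomorph.piEquivPiSubtypeProd p (fun _ : κ => ℕ → Bool) with he
    have hsymm : ∀ (z : ({i // p i} → ℕ → Bool) × ({i // ¬ p i} → ℕ → Bool)),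
        e.symm z = glueP p z.1 z.2 := fun z => rfl
    set K : Set (({i // p i} → ℕ → Bool) × ({i // ¬ p i} → ℕ → Bool)) :=
      (e.symm ⁻¹' S) ∩ (Set.univ ×ˢ Uᶜ) with hK
    have hKcl : IsClosed K :=
      (hS.preimage e.symm.continuous).inter (isClosed_univ.prod hUopen.isClosed_compl)
    have hKcp : IsCompact K := hKcl.isCompact
    have hVcl : IsClosed (Prod.fst '' K) := (hKcp.image continuous_fst).isClosed
    refine ⟨(Prod.fst '' K)ᶜ, ?_, hVcl.isOpen_compl, ?_⟩
    · intro y₁ hy₁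
      have hsub : {y' | glueP p y₁ y' ∈ S} ⊆ U := by
        intro y' hy'
        by_contra hyU
        exact hy₁ ⟨(y₁, y'), ⟨by rw [Set.mem_preimage, hsymm]; exact hy', by
          exact ⟨Set.mem_univ _, hyU⟩⟩, rfl⟩
      exact lt_of_le_of_lt (measure_mono hsub) hUlt
    · rintro ⟨⟨y₀, y'⟩, hmem, rfl⟩
      have h1 : glueP p y₀ y' ∈ S := by
        have := hmem.1
        rwa [Set.mem_preimage, hsymm] at this
      exact hmem.2.2 (hUsub h1)
  have hrw : {x | t ≤ μ₂ {y' | glueP p (resP p x) y' ∈ S}}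
      = (resP p ⁻¹' {y | μ₂ {y' | glueP p y y' ∈ S} < t})ᶜ := by
    ext x; simp [not_lt]
  rw [hrw]
  exact (hopen.preimage hres).isClosed_compl


section Main

variable {ζ : Ordinal}

noncomputable def glueStmt (ζ : Ordinal) (ξ : Ordinal) (y : {i : Set.Iio ζ // i.1 < ξ} → ℕ → Bool)
    (w : {i : Set.Iio ζ // ξ ≤ i.1} → ℕ → Bool) : (Set.Iio ζ) → ℕ → Bool :=
  fun i => if h : i.1 < ξ then y ⟨i, h⟩ else w ⟨i, le_of_not_gt h⟩

def reN (ζ : Ordinal) (ξ : Ordinal) (w : {i : Set.Iio ζ // ξ ≤ i.1} → ℕ → Bool) :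
    {i : Set.Iio ζ // ¬ i.1 < ξ} → ℕ → Bool := fun j => w ⟨j.1, le_of_not_gt j.2⟩

lemma glueStmt_eq_glueP (ξ : Ordinal) (y : {i : Set.Iio ζ // i.1 < ξ} → ℕ → Bool)
    (w : {i : Set.Iio ζ // ξ ≤ i.1} → ℕ → Bool) :
    glueStmt ζ ξ y w = glueP (fun i : Set.Iio ζ => i.1 < ξ) y (reN ζ ξ w) := rfl

lemma measurable_glueStmt_right (ξ : Ordinal) (y : {i : Set.Iio ζ // i.1 < ξ} → ℕ → Bool) :
    Measurable (fun w => glueStmt ζ ξ y w) := by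
  apply measurable_pi_lambda
  intro i
  by_cases h : i.1 < ξ
  · simp only [glueStmt, dif_pos h]; exact measurable_const
  · simp only [glueStmt, dif_neg h]; exact measurable_pi_apply _

lemma measurable_reN (ξ : Ordinal) : Measurable (reN ζ ξ) :=
  measurable_pi_lambda _ fun j => measurable_pi_apply _

variable (ν : (ξ : Ordinal) → Measure ({i : Set.Iio ζ // ξ ≤ i.1} → ℕ → Bool))

/-- tail-section measure of `S` over the initial segment of `x` below `η`. -/
noncomputable def G (S : Set ((Set.Iio ζ) → ℕ → Bool)) (η : Ordinal)
    (x : (Set.Iio ζ) → ℕ → Bool) : ℝ≥0∞ :=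
  ν η {w | glueStmt ζ η (fun i => x i.1) w ∈ S}

noncomputable def nuN (ξ : Ordinal) : Measure ({i : Set.Iio ζ // ¬ i.1 < ξ} → ℕ → Bool) :=
  (ν ξ).map (reN ζ ξ)

lemma icpm_nuN (hν : ∀ ξ, IsCantorProductMeasure (ν ξ)) (ξ : Ordinal) :
    IsCantorProductMeasure (nuN ν ξ) :=
  icpm_map_comp (hν ξ)
    (fun j : {i : Set.Iio ζ // ¬ i.1 < ξ} =>
      (⟨j.1, le_of_not_gt j.2⟩ : {i : Set.Iio ζ // ξ ≤ i.1}))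
    (by
      intro a b h
      apply Subtype.ext
      simpa using congrArg Subtype.val h)

lemma G_eq (hν : ∀ ξ, IsCantorProductMeasure (ν ξ)) {S : Set ((Set.Iio ζ) → ℕ → Bool)}
    (hS : MeasurableSet S) (η : Ordinal) (x : (Set.Iio ζ) → ℕ → Bool) :
    G ν S η x = nuN ν η
      {y' | glueP (fun i : Set.Iio ζ => i.1 < η)
        (resP (fun i : Set.Iio ζ => i.1 < η) x) y' ∈ S} := by
  have hms : MeasurableSet {y' | glueP (fun i : Set.Iio ζ => i.1 < η)
      (resP (fun i : Set.Iio ζ => i.1 < η) x) y' ∈ S} :=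
    (measurable_glueP_right _ _) hS
  rw [nuN, Measure.map_apply (measurable_reN η) hms]
  rfl

lemma res_glueStmt (ξ : Ordinal) (y : {i : Set.Iio ζ // i.1 < ξ} → ℕ → Bool)
    (y' : {i : Set.Iio ζ // ξ ≤ i.1} → ℕ → Bool) :
    (fun i : {i : Set.Iio ζ // i.1 < ξ} => (glueStmt ζ ξ y y') i.1) = y := by
  funext i
  simp only [glueStmt, dif_pos i.2]

lemma glue_tail_eq {ξ η : Ordinal} (hle : ξ ≤ η)
    (yb : {i : Set.Iio ζ // i.1 < ξ} → ℕ → Bool)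
    (y' : {i : Set.Iio ζ // ξ ≤ i.1} → ℕ → Bool)
    (w : {i : Set.Iio ζ // η ≤ i.1} → ℕ → Bool) :
    glueStmt ζ ξ yb (glueP (fun j : {i : Set.Iio ζ // ξ ≤ i.1} => j.1.1 < η)
        (resP (fun j : {i : Set.Iio ζ // ξ ≤ i.1} => j.1.1 < η) y')
        (fun j => w ⟨j.1.1, le_of_not_gt j.2⟩))
      = glueStmt ζ η (fun i => (glueStmt ζ ξ yb y') i.1) w := by
  funext i
  by_cases h1 : i.1 < ξ
  · have h2 : i.1 < η := lt_of_lt_of_le h1 hle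
    simp only [glueStmt, glueP, resP, dif_pos h1, dif_pos h2]
  · by_cases h2 : i.1 < η
    · simp only [glueStmt, glueP, resP, dif_neg h1, dif_pos h2]
    · simp only [glueStmt, glueP, resP, dif_neg h1, dif_neg h2]

lemma markovFull {μ : Measure ((Set.Iio ζ) → ℕ → Bool)} (hμ : IsCantorProductMeasure μ)
    (hν : ∀ ξ, IsCantorProductMeasure (ν ξ)) {S : Set ((Set.Iio ζ) → ℕ → Bool)}
    (hS : MeasurableSet S) (η : Ordinal) (t : ℝ≥0∞) :
    μ {x | x ∈ S ∧ G ν S η x < t} ≤ t := by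
  have h₁ : IsCantorProductMeasure (μ.map (resP (fun i : Set.Iio ζ => i.1 < η))) :=
    icpm_map_comp hμ (fun k' : {i : Set.Iio ζ // i.1 < η} => k'.1)
      (fun a b h => Subtype.ext h)
  have hrw : {x | x ∈ S ∧ G ν S η x < t} = {x | x ∈ S ∧
      nuN ν η {y' | glueP (fun i : Set.Iio ζ => i.1 < η)
        (resP (fun i : Set.Iio ζ => i.1 < η) x) y' ∈ S} < t} := by
    ext x
    rw [Set.mem_setOf_eq, Set.mem_setOf_eq, G_eq ν hν hS]
  rw [hrw]
  exact icpm_markov _ hμ h₁ (icpm_nuN ν hν η) hS t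

lemma sectZeroFull {μ : Measure ((Set.Iio ζ) → ℕ → Bool)} (hμ : IsCantorProductMeasure μ)
    (hν : ∀ ξ, IsCantorProductMeasure (ν ξ)) {S : Set ((Set.Iio ζ) → ℕ → Bool)}
    (hS : MeasurableSet S) (η : Ordinal) :
    μ {x | x ∈ S ∧ G ν S η x = 0} = 0 := by
  have h₁ : IsCantorProductMeasure (μ.map (resP (fun i : Set.Iio ζ => i.1 < η))) :=
    icpm_map_comp hμ (fun k' : {i : Set.Iio ζ // i.1 < η} => k'.1)
      (fun a b h => Subtype.ext h)
  have hrw : {x | x ∈ S ∧ G ν S η x = 0} = {x | x ∈ S ∧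
      nuN ν η {y' | glueP (fun i : Set.Iio ζ => i.1 < η)
        (resP (fun i : Set.Iio ζ => i.1 < η) x) y' ∈ S} = 0} := by
    ext x
    rw [Set.mem_setOf_eq, Set.mem_setOf_eq, G_eq ν hν hS]
  rw [hrw]
  exact icpm_sect_zero _ hμ h₁ (icpm_nuN ν hν η) hS

lemma isClosedCond (hcnt : Countable (Set.Iio ζ))
    (hν : ∀ ξ, IsCantorProductMeasure (ν ξ)) {S : Set ((Set.Iio ζ) → ℕ → Bool)}
    (hScl : IsClosed S) (η : Ordinal) (t : ℝ≥0∞) :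
    IsClosed {x | t ≤ G ν S η x} := by
  haveI := hcnt
  have hrw : {x | t ≤ G ν S η x} = {x | t ≤
      nuN ν η {y' | glueP (fun i : Set.Iio ζ => i.1 < η)
        (resP (fun i : Set.Iio ζ => i.1 < η) x) y' ∈ S}} := by
    ext x
    rw [Set.mem_setOf_eq, Set.mem_setOf_eq, G_eq ν hν hScl.measurableSet]
  rw [hrw]
  exact isClosed_sect_ge _ (icpm_nuN ν hν η) hScl t

lemma G_glue_indep {ξ η : Ordinal} (hle : η ≤ ξ) {S : Set ((Set.Iio ζ) → ℕ → Bool)}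
    (yb : {i : Set.Iio ζ // i.1 < ξ} → ℕ → Bool)
    (y' y'' : {i : Set.Iio ζ // ξ ≤ i.1} → ℕ → Bool) :
    G ν S η (glueStmt ζ ξ yb y') = G ν S η (glueStmt ζ ξ yb y'') := by
  have h : (fun i : {i : Set.Iio ζ // i.1 < η} => (glueStmt ζ ξ yb y') i.1)
      = (fun i : {i : Set.Iio ζ // i.1 < η} => (glueStmt ζ ξ yb y'') i.1) := by
    funext i
    have h1 : i.1.1 < ξ := lt_of_lt_of_le i.2 hle
    simp only [glueStmt, dif_pos h1]
  unfold G
  rw [h]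

lemma markovTail (hν : ∀ ξ, IsCantorProductMeasure (ν ξ)) {ξ η : Ordinal} (hlt : ξ < η)
    {S : Set ((Set.Iio ζ) → ℕ → Bool)} (hS : MeasurableSet S)
    (yb : {i : Set.Iio ζ // i.1 < ξ} → ℕ → Bool) (t : ℝ≥0∞) :
    ν ξ {y' | glueStmt ζ ξ yb y' ∈ S ∧ G ν S η (glueStmt ζ ξ yb y') < t} ≤ t := by
  set p : {i : Set.Iio ζ // ξ ≤ i.1} → Prop := fun j => j.1.1 < η with hp
  have h₁ : IsCantorProductMeasure ((ν ξ).map (resP p)) :=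
    icpm_map_comp (hν ξ) (fun k' : {j : {i : Set.Iio ζ // ξ ≤ i.1} // p j} => k'.1)
      (fun a b h => Subtype.ext h)
  set μ₂ : Measure ({j : {i : Set.Iio ζ // ξ ≤ i.1} // ¬ p j} → ℕ → Bool) :=
    (ν η).map (fun w j => w ⟨j.1.1, le_of_not_gt j.2⟩) with hμ₂
  have h₂ : IsCantorProductMeasure μ₂ :=
    icpm_map_comp (hν η)
      (fun j : {j : {i : Set.Iio ζ // ξ ≤ i.1} // ¬ p j} =>
        (⟨j.1.1, le_of_not_gt j.2⟩ : {i : Set.Iio ζ // η ≤ i.1}))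
      (by
        intro a b h
        apply Subtype.ext
        apply Subtype.ext
        simpa using congrArg Subtype.val h)
  set S' : Set ({i : Set.Iio ζ // ξ ≤ i.1} → ℕ → Bool) := {y' | glueStmt ζ ξ yb y' ∈ S}
    with hS'
  have hS'm : MeasurableSet S' := (measurable_glueStmt_right ξ yb) hS
  have hkey : ∀ y' : {i : Set.Iio ζ // ξ ≤ i.1} → ℕ → Bool,
      μ₂ {w' | glueP p (resP p y') w' ∈ S'} = G ν S η (glueStmt ζ ξ yb y') := by
    intro y'
    rw [hμ₂, Measure.map_apply (measurable_pi_lambda _ fun j => measurable_pi_apply _)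
      ((measurable_glueP_right _ _) hS'm)]
    have : ((fun (w : {i : Set.Iio ζ // η ≤ i.1} → ℕ → Bool) j => w ⟨j.1.1, le_of_not_gt j.2⟩)
        ⁻¹' {w' | glueP p (resP p y') w' ∈ S'})
        = {w | glueStmt ζ η (fun i => (glueStmt ζ ξ yb y') i.1) w ∈ S} := by
      ext w
      simp only [Set.mem_preimage, hS', Set.mem_setOf_eq]
      rw [glue_tail_eq (le_of_lt hlt)]
    rw [this]
    rfl
  have hmark := icpm_markov p (hν ξ) h₁ h₂ hS'm t
  have hrw : {y' | y' ∈ S' ∧ μ₂ {w' | glueP p (resP p y') w' ∈ S'} < t}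
      = {y' | glueStmt ζ ξ yb y' ∈ S ∧ G ν S η (glueStmt ζ ξ yb y') < t} := by
    ext y'
    rw [Set.mem_setOf_eq, Set.mem_setOf_eq, hkey y']
    rfl
  rwa [hrw] at hmark


lemma tsum_inv_two_pow_add_two : ∑' k : ℕ, (2⁻¹ : ℝ≥0∞)^(k+2) = 2⁻¹ := by
  have h : (fun k : ℕ => (2⁻¹ : ℝ≥0∞)^(k+2)) = fun k => 2⁻¹^k * (2⁻¹)^2 := by
    funext k; rw [pow_add]
  rw [h, ENNReal.tsum_mul_right, ENNReal.tsum_geometric, ENNReal.one_sub_inv_two, inv_inv]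
  rw [pow_two, ← mul_assoc, ENNReal.mul_inv_cancel (by norm_num) (by norm_num), one_mul]

lemma antitone_decomp {Y : Type*} {A : ℕ → Set Y} (hA : Antitone A) :
    A 0 ⊆ (⋂ k, A k) ∪ ⋃ k, (A k \ A (k+1)) := by
  classical
  intro x hx
  by_cases h : ∀ k, x ∈ A k
  · exact Or.inl (Set.mem_iInter.2 h)
  · push_neg at h
    right
    have hk := Nat.find_spec h
    have hk0 : Nat.find h ≠ 0 := by
      intro e
      rw [e] at hk
      exact hk hx
    obtain ⟨j, hj⟩ := Nat.exists_eq_succ_of_ne_zero hk0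
    refine Set.mem_iUnion.2 ⟨j, ?_, ?_⟩
    · by_contra hmem
      exact (Nat.find_min h (by omega)) hmem
    · rw [hj] at hk
      exact hk

lemma exists_delta (hcnt : Countable (Set.Iio ζ)) {μ : Measure ((Set.Iio ζ) → ℕ → Bool)}
    (hμ : IsCantorProductMeasure μ) (hν : ∀ ξ, IsCantorProductMeasure (ν ξ))
    {S : Set ((Set.Iio ζ) → ℕ → Bool)} (hScl : IsClosed S) (η : Ordinal)
    {b ε : ℝ≥0∞} (hb : 0 < b) (hε : 0 < ε) :
    ∃ δ : ℝ≥0∞, 0 < δ ∧ δ ≤ b ∧ μ {x | x ∈ S ∧ G ν S η x < δ} ≤ ε := by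
  haveI := hcnt
  haveI : IsProbabilityMeasure μ := icpm_prob hμ
  set A : ℕ → Set ((Set.Iio ζ) → ℕ → Bool) :=
    fun j => {x | x ∈ S ∧ G ν S η x < 2⁻¹^j} with hA
  have hAm : ∀ j, MeasurableSet (A j) := by
    intro j
    have : A j = S ∩ {x | (2⁻¹:ℝ≥0∞)^j ≤ G ν S η x}ᶜ := by
      ext x
      simp [hA, not_le]
    rw [this]
    exact hScl.measurableSet.inter (isClosedCond ν hcnt hν hScl η _).measurableSet.compl
  have hAanti : Antitone A := by
    intro j k hjk x hx
    exact ⟨hx.1, lt_of_lt_of_le hx.2 (pow_le_pow_of_le_one zero_le (by simp) hjk)⟩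
  have hInt : ⋂ j, A j ⊆ {x | x ∈ S ∧ G ν S η x = 0} := by
    intro x hx
    have h1 := Set.mem_iInter.1 hx 0
    refine ⟨h1.1, ?_⟩
    by_contra h0
    obtain ⟨j, hj⟩ := ENNReal.exists_inv_two_pow_lt h0
    exact absurd (Set.mem_iInter.1 hx j).2 (not_lt.2 hj.le)
  have hzero : μ (⋂ j, A j) = 0 :=
    le_antisymm (le_trans (measure_mono hInt)
      (le_of_eq (sectZeroFull ν hμ hν hScl.measurableSet η))) zero_le
  have htend := tendsto_measure_iInter_atTop (μ := μ)
    (fun j => (hAm j).nullMeasurableSet) hAanti ⟨0, measure_ne_top _ _⟩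
  rw [hzero] at htend
  have hev : ∀ᶠ j in Filter.atTop, μ (A j) < ε :=
    htend.eventually_lt_const hε
  obtain ⟨j, hj⟩ := hev.exists
  refine ⟨min (2⁻¹^j) b, lt_min (ENNReal.pow_pos (by norm_num) j) hb, min_le_right _ _, ?_⟩
  refine le_trans (measure_mono ?_) hj.le
  intro x hx
  exact ⟨hx.1, lt_of_lt_of_le hx.2 (min_le_left _ _)⟩

end Main

end CS5


open scoped ENNReal in
/-- For a countable ordinal `ζ` and a closed set
`C ⊆ (2^ℕ)^ζ` of positive product measure there is a closed subset `C* ⊆ C` of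
positive measure all of whose sections by initial segments are either empty or of
positive measure (in the corresponding tail product `(2^ℕ)^{[ξ,ζ)}`). -/
theorem exists_closed_subset_with_positive_sections
    (ζ : Ordinal) (hζ : Countable (Set.Iio ζ))
    (μ : Measure ((Set.Iio ζ) → (ℕ → Bool))) (hμ : IsCantorProductMeasure μ)
    (ν : (ξ : Ordinal) → Measure ({i : Set.Iio ζ // ξ ≤ i.1} → (ℕ → Bool)))
    (hν : ∀ ξ : Ordinal, IsCantorProductMeasure (ν ξ))
    (C : Set ((Set.Iio ζ) → (ℕ → Bool))) (hC : IsClosed C) (hCpos : 0 < μ C) :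
    ∃ Cstar : Set ((Set.Iio ζ) → (ℕ → Bool)), Cstar ⊆ C ∧ IsClosed Cstar ∧ 0 < μ Cstar ∧
      ∀ ξ : Ordinal, ξ < ζ → ∀ y : {i : Set.Iio ζ // i.1 < ξ} → (ℕ → Bool),
        {y' : {i : Set.Iio ζ // ξ ≤ i.1} → (ℕ → Bool) |
            (fun i : Set.Iio ζ =>
              if h : i.1 < ξ then y ⟨i, h⟩ else y' ⟨i, not_lt.mp h⟩) ∈ Cstar} = ∅ ∨
        0 < ν ξ {y' : {i : Set.Iio ζ // ξ ≤ i.1} → (ℕ → Bool) |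
            (fun i : Set.Iio ζ =>
              if h : i.1 < ξ then y ⟨i, h⟩ else y' ⟨i, not_lt.mp h⟩) ∈ Cstar} := by
  classical
  haveI := hζ
  haveI : IsProbabilityMeasure μ := CS5.icpm_prob hμ
  rcases isEmpty_or_nonempty (Set.Iio ζ) with hE | hNE
  · exact ⟨C, subset_rfl, hC, hCpos, fun ξ hξ y => (hE.false ⟨ξ, hξ⟩).elim⟩
  obtain ⟨g, hg⟩ := exists_surjective_nat (Set.Iio ζ)
  set ordn : ℕ → Ordinal := fun n => (g n).1 with hordn
  set ee : ℕ → ℝ≥0∞ := fun k => μ C * 2⁻¹^(k+2) with hee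
  have heepos : ∀ k, 0 < ee k := fun k =>
    ENNReal.mul_pos hCpos.ne' (ENNReal.pow_pos (by norm_num) _).ne'
  set pick : Set ((Set.Iio ζ) → ℕ → Bool) → Ordinal → ℝ≥0∞ → ℕ → ℝ≥0∞ :=
    fun S η b k => if h : ∃ δ : ℝ≥0∞, 0 < δ ∧ δ ≤ b ∧
        μ {x | x ∈ S ∧ CS5.G ν S η x < δ} ≤ ee k then h.choose else 1 with hpick
  have hpick_spec : ∀ (S : Set ((Set.Iio ζ) → ℕ → Bool)) (η : Ordinal) (b : ℝ≥0∞) (k : ℕ),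
      IsClosed S → 0 < b →
      0 < pick S η b k ∧ pick S η b k ≤ b ∧
      μ {x | x ∈ S ∧ CS5.G ν S η x < pick S η b k} ≤ ee k := by
    intro S η b k hScl hb
    have hex : ∃ δ : ℝ≥0∞, 0 < δ ∧ δ ≤ b ∧
        μ {x | x ∈ S ∧ CS5.G ν S η x < δ} ≤ ee k :=
      CS5.exists_delta ν hζ hμ hν hScl η hb (heepos k)
    simp only [hpick]
    rw [dif_pos hex]
    exact hex.choose_spec
  set P : ℕ → Set ((Set.Iio ζ) → ℕ → Bool) × ℝ≥0∞ :=
    fun k => Nat.rec (C, pick C (ordn 0) 1 0)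
      (fun k ih => (ih.1 ∩ {x | ih.2 ≤ CS5.G ν ih.1 (ordn k) x},
        pick (ih.1 ∩ {x | ih.2 ≤ CS5.G ν ih.1 (ordn k) x}) (ordn (k+1)) (ih.2 * 4⁻¹) (k+1))) k
    with hP
  set D : ℕ → Set ((Set.Iio ζ) → ℕ → Bool) := fun k => (P k).1 with hD
  set dl : ℕ → ℝ≥0∞ := fun k => (P k).2 with hdl
  have hD0 : D 0 = C := rfl
  have hDsucc : ∀ k, D (k+1) = D k ∩ {x | dl k ≤ CS5.G ν (D k) (ordn k) x} := fun k => rfl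
  have hdl0 : dl 0 = pick C (ordn 0) 1 0 := rfl
  have hdlsucc : ∀ k, dl (k+1) = pick (D (k+1)) (ordn (k+1)) (dl k * 4⁻¹) (k+1) := fun k => rfl
  have hinv : ∀ k, IsClosed (D k) ∧ (0 < dl k ∧ dl k ≠ ∞) ∧
      μ {x | x ∈ D k ∧ CS5.G ν (D k) (ordn k) x < dl k} ≤ ee k := by
    intro k
    induction k with
    | zero =>
      have hs := hpick_spec C (ordn 0) 1 0 hC one_pos
      rw [← hdl0] at hs
      rw [hD0]
      exact ⟨hC, ⟨hs.1, ne_top_of_le_ne_top ENNReal.one_ne_top hs.2.1⟩, hs.2.2⟩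
    | succ k ih =>
      have hcl : IsClosed (D (k+1)) := by
        rw [hDsucc k]
        exact ih.1.inter (CS5.isClosedCond ν hζ hν ih.1 (ordn k) (dl k))
      have hbpos : (0:ℝ≥0∞) < dl k * 4⁻¹ := ENNReal.mul_pos ih.2.1.1.ne' (by norm_num)
      have hs := hpick_spec (D (k+1)) (ordn (k+1)) (dl k * 4⁻¹) (k+1) hcl hbpos
      rw [← hdlsucc k] at hs
      exact ⟨hcl, ⟨hs.1, ne_top_of_le_ne_top
        (ENNReal.mul_ne_top ih.2.1.2 (by norm_num)) hs.2.1⟩, hs.2.2⟩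
  have hstep : ∀ k, dl (k+1) ≤ dl k * 4⁻¹ := by
    intro k
    have hbpos : (0:ℝ≥0∞) < dl k * 4⁻¹ := ENNReal.mul_pos (hinv k).2.1.1.ne' (by norm_num)
    have hs := hpick_spec (D (k+1)) (ordn (k+1)) (dl k * 4⁻¹) (k+1) (hinv (k+1)).1 hbpos
    rw [← hdlsucc k] at hs
    exact hs.2.1
  have hmono : Antitone D := antitone_nat_of_succ_le fun k => by
    rw [hDsucc k]; exact Set.inter_subset_left
  have hDm : ∀ k, MeasurableSet (D k) := fun k => (hinv k).1.measurableSet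
  have hdiff : ∀ k, D k \ D (k+1) ⊆ {x | x ∈ D k ∧ CS5.G ν (D k) (ordn k) x < dl k} := by
    intro k x hx
    obtain ⟨h1, h2⟩ := hx
    rw [hDsucc k] at h2
    refine ⟨h1, not_le.1 fun hle => h2 ⟨h1, hle⟩⟩
  refine ⟨⋂ k, D k, ?_, isClosed_iInter (fun k => (hinv k).1), ?_, ?_⟩
  · intro x hx
    rw [← hD0]
    exact Set.mem_iInter.1 hx 0
  · -- positive measure
    have hsub := CS5.antitone_decomp hmono
    rw [hD0] at hsub
    have h1 : μ C ≤ μ (⋂ k, D k) + ∑' k, μ (D k \ D (k+1)) := by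
      refine le_trans (measure_mono hsub) ?_
      refine le_trans (measure_union_le _ _) ?_
      gcongr
      exact measure_iUnion_le _
    have h2 : ∑' k, μ (D k \ D (k+1)) ≤ μ C * 2⁻¹ := by
      calc ∑' k, μ (D k \ D (k+1)) ≤ ∑' k, ee k :=
            ENNReal.tsum_le_tsum fun k =>
              le_trans (measure_mono (hdiff k)) (hinv k).2.2
        _ = μ C * 2⁻¹ := by
            simp only [hee]
            rw [ENNReal.tsum_mul_left, CS5.tsum_inv_two_pow_add_two]
    by_contra h0
    push_neg at h0
    have hz : μ (⋂ k, D k) = 0 := le_antisymm h0 zero_le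
    rw [hz, zero_add] at h1
    have hcontr : μ C ≤ μ C * 2⁻¹ := h1.trans h2
    exact absurd hcontr (not_le.2 (ENNReal.half_lt_self hCpos.ne' (measure_ne_top μ C)))
  · -- sections
    intro ξ hξ y
    obtain ⟨n, hn⟩ := hg ⟨ξ, hξ⟩
    have hordnn : ordn n = ξ := by rw [hordn]; exact congrArg Subtype.val hn
    set T : ℕ → Set ({i : Set.Iio ζ // ξ ≤ i.1} → ℕ → Bool) :=
      fun k => {y' | CS5.glueStmt ζ ξ y y' ∈ D k} with hT
    have hTset : {y' : {i : Set.Iio ζ // ξ ≤ i.1} → (ℕ → Bool) |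
        (fun i : Set.Iio ζ =>
          if h : i.1 < ξ then y ⟨i, h⟩ else y' ⟨i, le_of_not_gt h⟩) ∈ ⋂ k, D k}
        = ⋂ k, T k := by
      ext y'
      rw [Set.mem_setOf_eq, Set.mem_iInter]
      exact ⟨fun h => Set.mem_iInter.2 h, fun h k => Set.mem_iInter.1 h k⟩
    rw [hTset]
    by_cases hemp : (⋂ k, T k) = ∅
    · exact Or.inl hemp
    right
    obtain ⟨y₀, hy₀⟩ := Set.nonempty_iff_ne_empty.2 hemp
    haveI : IsProbabilityMeasure (ν ξ) := CS5.icpm_prob (hν ξ)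
    have hy₀k : ∀ k, CS5.glueStmt ζ ξ y y₀ ∈ D k := fun k => Set.mem_iInter.1 hy₀ k
    have hTanti : Antitone T := fun j k hjk y' hy' => hmono hjk hy'
    have hGbase : ∀ k, CS5.G ν (D k) ξ (CS5.glueStmt ζ ξ y y₀) = ν ξ (T k) := by
      intro k
      unfold CS5.G
      rw [CS5.res_glueStmt]
    have hbase : dl n ≤ ν ξ (T n) := by
      have hmem := hy₀k (n+1)
      rw [hDsucc n] at hmem
      have h2 : dl n ≤ CS5.G ν (D n) (ordn n) (CS5.glueStmt ζ ξ y y₀) := hmem.2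
      rw [hordnn, hGbase n] at h2
      exact h2
    have hnoloss : ∀ k, ordn k ≤ ξ → T (k+1) = T k := by
      intro k hk
      apply Set.Subset.antisymm (hTanti (Nat.le_succ k))
      intro y' hy'
      show CS5.glueStmt ζ ξ y y' ∈ D (k+1)
      rw [hDsucc k]
      refine ⟨hy', ?_⟩
      show dl k ≤ CS5.G ν (D k) (ordn k) (CS5.glueStmt ζ ξ y y')
      rw [CS5.G_glue_indep ν hk y y' y₀]
      have hmem := hy₀k (k+1)
      rw [hDsucc k] at hmem
      exact hmem.2
    have hloss : ∀ k, ν ξ (T k \ T (k+1)) ≤ dl k := by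
      intro k
      by_cases hk : ordn k ≤ ξ
      · rw [hnoloss k hk]
        simp
      · push_neg at hk
        have hsubdiff : T k \ T (k+1) ⊆ {y' | CS5.glueStmt ζ ξ y y' ∈ D k ∧
            CS5.G ν (D k) (ordn k) (CS5.glueStmt ζ ξ y y') < dl k} := by
          intro y' hy'
          obtain ⟨h1, h2⟩ := hy'
          have h2' : ¬ (CS5.glueStmt ζ ξ y y' ∈ D (k+1)) := h2
          rw [hDsucc k] at h2'
          exact ⟨h1, not_le.1 fun hle => h2' ⟨h1, hle⟩⟩
        exact le_trans (measure_mono hsubdiff)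
          (CS5.markovTail ν hν hk (hDm k) y (dl k))
    have hgeom : ∀ j, dl (n+1+j) ≤ dl n * 4⁻¹^(j+1) := by
      intro j
      induction j with
      | zero => simpa using hstep n
      | succ j ih =>
        have heq : n+1+(j+1) = (n+1+j)+1 := by omega
        rw [heq]
        calc dl ((n+1+j)+1) ≤ dl (n+1+j) * 4⁻¹ := hstep _
          _ ≤ (dl n * 4⁻¹^(j+1)) * 4⁻¹ := mul_le_mul_left ih _
          _ = dl n * 4⁻¹^(j+2) := by rw [mul_assoc, ← pow_succ]
    have hpowle : ∀ j : ℕ, (4⁻¹:ℝ≥0∞)^(j+1) ≤ 2⁻¹^(j+2) := by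
      intro j
      have h4 : (4⁻¹:ℝ≥0∞) = 2⁻¹^2 := by
        rw [← ENNReal.inv_pow]
        norm_num
      rw [h4, ← pow_mul]
      exact pow_le_pow_of_le_one zero_le (by simp) (by omega)
    have hsumtail : ∑' j, dl (n+1+j) ≤ dl n * 2⁻¹ := by
      calc ∑' j, dl (n+1+j) ≤ ∑' j : ℕ, dl n * 2⁻¹^(j+2) :=
            ENNReal.tsum_le_tsum fun j =>
              le_trans (hgeom j) (mul_le_mul_right (hpowle j) _)
        _ = dl n * 2⁻¹ := by rw [ENNReal.tsum_mul_left, CS5.tsum_inv_two_pow_add_two]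
    have hInterT : (⋂ j, T (n+1+j)) = ⋂ k, T k := by
      apply Set.Subset.antisymm
      · intro z hz
        refine Set.mem_iInter.2 fun k => ?_
        exact hTanti (by omega : k ≤ n+1+k) (Set.mem_iInter.1 hz k)
      · intro z hz
        exact Set.mem_iInter.2 fun j => Set.mem_iInter.1 hz (n+1+j)
    have hchain : ν ξ (T (n+1)) ≤ ν ξ (⋂ k, T k) + ∑' j, dl (n+1+j) := by
      have hanti2 : Antitone (fun j => T (n+1+j)) := fun a b hab =>
        hTanti (by omega)
      have hsub2 := CS5.antitone_decomp hanti2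
      calc ν ξ (T (n+1)) ≤
            ν ξ ((⋂ j, T (n+1+j)) ∪ ⋃ j, (T (n+1+j) \ T (n+1+(j+1)))) := by
            refine measure_mono ?_
            have : T (n+1) = T (n+1+0) := by norm_num
            rw [this]
            exact hsub2
        _ ≤ ν ξ (⋂ j, T (n+1+j)) + ∑' j, ν ξ (T (n+1+j) \ T (n+1+(j+1))) := by
            refine le_trans (measure_union_le _ _) ?_
            gcongr
            exact measure_iUnion_le _
        _ ≤ ν ξ (⋂ k, T k) + ∑' j, dl (n+1+j) := by
            rw [hInterT]
            gcongr with j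
            have heq : n+1+(j+1) = (n+1+j)+1 := by omega
            rw [heq]
            exact hloss (n+1+j)
    have hTn1 : dl n ≤ ν ξ (T (n+1)) := by
      rw [hnoloss n (le_of_eq hordnn)]
      exact hbase
    by_contra hpos
    push_neg at hpos
    have hz : ν ξ (⋂ k, T k) = 0 := le_antisymm hpos zero_le
    rw [hz, zero_add] at hchain
    have hfin : dl n ≤ dl n * 2⁻¹ := le_trans hTn1 (le_trans hchain hsumtail)
    exact absurd hfin (not_le.2
      (ENNReal.half_lt_self (hinv n).2.1.1.ne' (hinv n).2.1.2))
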